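/- Fix a constant sample size ℓ ≥ 1 and a protocol family {(g_n^[0], g_n^[1])}_{n} with sample size ℓ such that F_n is identically zero on [0,1] for all sufficiently large n. Then there exists a sequence of initial configurations C_n such that for every ε > 0 there is a constant c > 0 with Pr[τ_n(C_n) > n^{1−ε}] ≥ 1 − n^{−c} for all sufficiently large n. -/

import Mathlib

open MeasureTheory ProbabilityTheory
open scoped ENNReal

/-- `P_b(p)`: probability that an agent with opinion `b` adopts opinion 1, when the current
proportion of 1-opinions is `p`; it is the expectation of `g(K)` for `K ~ Binomial(ℓ, p)`. -/
noncomputable def sampleProb (ℓ : ℕ) (g : ℕ → ℝ) (p : ℝ) : ℝ :=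
  ∑ k ∈ Finset.range (ℓ + 1), (ℓ.choose k : ℝ) * p ^ k * (1 - p) ^ (ℓ - k) * g k

/-- Probability that a `Binomial(m, q)` random variable equals `k`. -/
noncomputable def binomProb (m : ℕ) (q : ℝ) (k : ℕ) : ℝ :=
  (m.choose k : ℝ) * q ^ k * (1 - q) ^ (m - k)

/-- One-step transition probability of the configuration chain: conditionally on `X_t = x`,
`X_{t+1} = z + B₁ + B₀` with independent `B₁ ~ Binomial(x - z, P₁(x/n))` and
`B₀ ~ Binomial(n - x - (1 - z), P₀(x/n))`. -/
noncomputable def transProb (n ℓ : ℕ) (g0 g1 : ℕ → ℝ) (z x y : ℕ) : ℝ :=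
  ∑ j ∈ Finset.range (n + 1),
    if z + j ≤ y then
      binomProb (x - z) (sampleProb ℓ g1 ((x : ℝ) / n)) j *
        binomProb (n - x - (1 - z)) (sampleProb ℓ g0 ((x : ℝ) / n)) (y - z - j)
    else 0

/-- A protocol with sample size `ℓ` has update probabilities in `[0,1]`. -/
def ValidProtocol (ℓ : ℕ) (g0 g1 : ℕ → ℝ) : Prop :=
  ∀ k ≤ ℓ, (0 ≤ g0 k ∧ g0 k ≤ 1) ∧ (0 ≤ g1 k ∧ g1 k ≤ 1)

/-- `(X_t)` is (a version of) the time-homogeneous configuration Markov chain of the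
bit-dissemination protocol `(g0, g1)` with `n` agents, sample size `ℓ` and source opinion `z`:
conditionally on the whole past, the law of `X_{t+1}` is given by `transProb` applied to the
current state. -/
def IsBDChain (n ℓ : ℕ) (g0 g1 : ℕ → ℝ) (z : ℕ) {Ω : Type*} [MeasurableSpace Ω]
    (μ : Measure Ω) (X : ℕ → Ω → ℕ) : Prop :=
  (∀ t, Measurable (X t)) ∧
    ∀ (t : ℕ) (x : ℕ → ℕ) (y : ℕ), μ {ω | ∀ s ≤ t, X s ω = x s} ≠ 0 →
      ProbabilityTheory.cond μ {ω | ∀ s ≤ t, X s ω = x s} {ω | X (t + 1) ω = y} =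
        ENNReal.ofReal (transProb n ℓ g0 g1 z (x t) y)

/-- The convergence time `τ = inf {t : ∀ s ≥ t, X_s = n·z}`, with value `∞` if no such `t`
exists. -/
noncomputable def convTime (n z : ℕ) {Ω : Type*} (X : ℕ → Ω → ℕ) (ω : Ω) : ℝ≥0∞ :=
  sInf {r : ℝ≥0∞ | ∃ t : ℕ, r = t ∧ ∀ s, t ≤ s → X s ω = n * z}

/-- The characteristic function `F_n(p) = -p + p·P₁(p) + (1-p)·P₀(p)`. -/
noncomputable def charF (ℓ : ℕ) (g0 g1 : ℕ → ℝ) (p : ℝ) : ℝ :=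
  -p + p * sampleProb ℓ g1 p + (1 - p) * sampleProb ℓ g0 p

lemma sum_choose_mul (m : ℕ) (a b : ℝ) :
    ∑ k ∈ Finset.range (m+1), (m.choose k : ℝ) * a ^ k * b ^ (m - k) = (a + b) ^ m := by
  rw [add_pow]
  exact Finset.sum_congr rfl fun k _ => by ring

lemma sum_k_choose_mul (m : ℕ) (a b : ℝ) :
    ∑ k ∈ Finset.range (m+1), (k : ℝ) * ((m.choose k : ℝ) * a ^ k * b ^ (m - k))
      = m * a * (a + b) ^ (m - 1) := by
  cases m with
  | zero => simp
  | succ m =>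
    rw [Finset.sum_range_succ']
    have key : ∀ j : ℕ, ((j:ℝ)+1) * ((m+1).choose (j+1) : ℝ) = ((m:ℝ)+1) * (m.choose j : ℝ) := by
      intro j
      have h := Nat.add_one_mul_choose_eq m j
      have h2 : ((m:ℝ)+1) * (m.choose j : ℝ) = ((m+1).choose (j+1) : ℝ) * ((j:ℝ)+1) := by
        exact_mod_cast h
      linarith
    have : ∀ j ∈ Finset.range (m+1),
        ((j+1 : ℕ) : ℝ) * (((m+1).choose (j+1) : ℝ) * a ^ (j+1) * b ^ (m+1 - (j+1)))
          = ((m:ℝ)+1) * a * ((m.choose j : ℝ) * a ^ j * b ^ (m - j)) := by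
      intro j _
      have e1 : m + 1 - (j+1) = m - j := by omega
      rw [e1]
      push_cast
      calc ((j:ℝ)+1) * (((m+1).choose (j+1) : ℝ) * a ^ (j+1) * b ^ (m - j))
          = (((j:ℝ)+1) * ((m+1).choose (j+1) : ℝ)) * (a ^ j * b ^ (m-j) * a) := by
            rw [pow_succ]; ring
        _ = (((m:ℝ)+1) * (m.choose j : ℝ)) * (a ^ j * b ^ (m-j) * a) := by rw [key j]
        _ = ((m:ℝ)+1) * a * ((m.choose j : ℝ) * a ^ j * b ^ (m - j)) := by ring
    rw [Finset.sum_congr rfl this]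
    rw [← Finset.mul_sum, sum_choose_mul]
    push_cast
    ring

lemma binomProb_mass (m : ℕ) (q : ℝ) :
    ∑ k ∈ Finset.range (m+1), binomProb m q k = 1 := by
  unfold binomProb
  rw [sum_choose_mul]
  simp

lemma binomProb_mean (m : ℕ) (q : ℝ) :
    ∑ k ∈ Finset.range (m+1), (k : ℝ) * binomProb m q k = m * q := by
  unfold binomProb
  rw [sum_k_choose_mul]
  simp

lemma binomProb_nonneg {m : ℕ} {q : ℝ} (h0 : 0 ≤ q) (h1 : q ≤ 1) (k : ℕ) :
    0 ≤ binomProb m q k := by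
  unfold binomProb
  have h1q : (0:ℝ) ≤ 1 - q := by linarith
  exact mul_nonneg (mul_nonneg (Nat.cast_nonneg _) (pow_nonneg h0 _)) (pow_nonneg h1q _)

lemma binomProb_eq_zero_of_lt {m k : ℕ} (h : m < k) (q : ℝ) : binomProb m q k = 0 := by
  unfold binomProb
  rw [Nat.choose_eq_zero_of_lt h]
  simp

lemma sampleProb_nonneg {ℓ : ℕ} {g : ℕ → ℝ} (hg : ∀ k ≤ ℓ, 0 ≤ g k) {p : ℝ}
    (hp0 : 0 ≤ p) (hp1 : p ≤ 1) : 0 ≤ sampleProb ℓ g p := by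
  unfold sampleProb
  apply Finset.sum_nonneg
  intro k hk
  have hk' : k ≤ ℓ := by simpa [Nat.lt_succ_iff] using hk
  have hgk := hg k hk'
  have h1p : (0:ℝ) ≤ 1 - p := by linarith
  have : (0:ℝ) ≤ (ℓ.choose k : ℝ) * p ^ k * (1 - p) ^ (ℓ - k) :=
    mul_nonneg (mul_nonneg (Nat.cast_nonneg _) (pow_nonneg hp0 _)) (pow_nonneg h1p _)
  exact mul_nonneg this hgk

lemma sampleProb_le_one {ℓ : ℕ} {g : ℕ → ℝ} (hg : ∀ k ≤ ℓ, g k ≤ 1)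
    (hg0 : ∀ k ≤ ℓ, 0 ≤ g k) {p : ℝ}
    (hp0 : 0 ≤ p) (hp1 : p ≤ 1) : sampleProb ℓ g p ≤ 1 := by
  unfold sampleProb
  have h1p : (0:ℝ) ≤ 1 - p := by linarith
  calc ∑ k ∈ Finset.range (ℓ+1), (ℓ.choose k : ℝ) * p ^ k * (1 - p) ^ (ℓ - k) * g k
      ≤ ∑ k ∈ Finset.range (ℓ+1), (ℓ.choose k : ℝ) * p ^ k * (1 - p) ^ (ℓ - k) := by
        apply Finset.sum_le_sum
        intro k hk
        have hk' : k ≤ ℓ := by simpa [Nat.lt_succ_iff] using hk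
        have hnn : (0:ℝ) ≤ (ℓ.choose k : ℝ) * p ^ k * (1 - p) ^ (ℓ - k) :=
          mul_nonneg (mul_nonneg (Nat.cast_nonneg _) (pow_nonneg hp0 _)) (pow_nonneg h1p _)
        nlinarith [hg k hk', hg0 k hk']
    _ = 1 := by rw [sum_choose_mul]; simp

lemma sampleProb_zero (ℓ : ℕ) (g : ℕ → ℝ) : sampleProb ℓ g 0 = g 0 := by
  unfold sampleProb
  rw [Finset.sum_eq_single 0]
  · simp
  · intro k _ hk
    rcases Nat.exists_eq_succ_of_ne_zero hk with ⟨j, rfl⟩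
    simp
  · simp

lemma sampleProb_one (ℓ : ℕ) (g : ℕ → ℝ) : sampleProb ℓ g 1 = g ℓ := by
  unfold sampleProb
  rw [Finset.sum_eq_single ℓ]
  · simp
  · intro k hk hkℓ
    have : 0 < ℓ - k := by
      simp [Nat.lt_succ_iff] at hk
      omega
    simp [zero_pow (by omega : ℓ - k ≠ 0)]
  · simp

lemma one_sub_sampleProb_le {ℓ : ℕ} {g : ℕ → ℝ} (hg1 : ∀ k ≤ ℓ, g k ≤ 1)
    (hg0 : ∀ k ≤ ℓ, 0 ≤ g k)
    (hgℓ : g ℓ = 1) {p : ℝ} (hp0 : 0 ≤ p) (hp1 : p ≤ 1) :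
    1 - sampleProb ℓ g p ≤ 2 ^ ℓ * (1 - p) := by
  have h1p : (0:ℝ) ≤ 1 - p := by linarith
  have hmass : (1:ℝ) = ∑ k ∈ Finset.range (ℓ+1), (ℓ.choose k : ℝ) * p ^ k * (1 - p) ^ (ℓ - k) := by
    rw [sum_choose_mul]; simp
  have hsum : 1 - sampleProb ℓ g p = ∑ k ∈ Finset.range (ℓ+1),
      ((ℓ.choose k : ℝ) * p ^ k * (1 - p) ^ (ℓ - k)
        - (ℓ.choose k : ℝ) * p ^ k * (1 - p) ^ (ℓ - k) * g k) := by
    unfold sampleProb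
    rw [Finset.sum_sub_distrib, ← hmass]
  rw [hsum]
  have hbound : ∀ k ∈ Finset.range (ℓ+1),
      (ℓ.choose k : ℝ) * p ^ k * (1 - p) ^ (ℓ - k)
        - (ℓ.choose k : ℝ) * p ^ k * (1 - p) ^ (ℓ - k) * g k
        ≤ (ℓ.choose k : ℝ) * (1 - p) := by
    intro k hk
    have hk' : k ≤ ℓ := by simpa [Nat.lt_succ_iff] using hk
    rcases eq_or_lt_of_le hk' with rfl | hlt
    · rw [hgℓ, mul_one, sub_self]
      exact mul_nonneg (Nat.cast_nonneg _) h1p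
    · have h1 : (ℓ.choose k : ℝ) * p ^ k * (1 - p) ^ (ℓ - k)
          - (ℓ.choose k : ℝ) * p ^ k * (1 - p) ^ (ℓ - k) * g k
          ≤ (ℓ.choose k : ℝ) * p ^ k * (1 - p) ^ (ℓ - k) := by
        have hnn : (0:ℝ) ≤ (ℓ.choose k : ℝ) * p ^ k * (1 - p) ^ (ℓ - k) :=
          mul_nonneg (mul_nonneg (Nat.cast_nonneg _) (pow_nonneg hp0 _)) (pow_nonneg h1p _)
        nlinarith [mul_nonneg hnn (hg0 k hk')]
      refine h1.trans ?_
      have hpk : p ^ k ≤ 1 := pow_le_one₀ hp0 hp1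
      have hq : (1 - p) ^ (ℓ - k) ≤ 1 - p := by
        have : ℓ - k = (ℓ - k - 1) + 1 := by omega
        rw [this, pow_succ]
        have h2 : (1-p) ^ (ℓ - k - 1) ≤ 1 := pow_le_one₀ h1p (by linarith)
        nlinarith
      have : p ^ k * (1 - p) ^ (ℓ - k) ≤ 1 - p := by nlinarith [pow_nonneg h1p (ℓ - k)]
      calc (ℓ.choose k : ℝ) * p ^ k * (1 - p) ^ (ℓ - k)
          = (ℓ.choose k : ℝ) * (p ^ k * (1 - p) ^ (ℓ - k)) := by ring
        _ ≤ (ℓ.choose k : ℝ) * (1 - p) := by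
            exact mul_le_mul_of_nonneg_left this (Nat.cast_nonneg _)
  calc ∑ k ∈ Finset.range (ℓ+1), ((ℓ.choose k : ℝ) * p ^ k * (1 - p) ^ (ℓ - k)
        - (ℓ.choose k : ℝ) * p ^ k * (1 - p) ^ (ℓ - k) * g k)
      ≤ ∑ k ∈ Finset.range (ℓ+1), (ℓ.choose k : ℝ) * (1 - p) := Finset.sum_le_sum hbound
    _ = (∑ k ∈ Finset.range (ℓ+1), (ℓ.choose k : ℝ)) * (1 - p) := by
        rw [Finset.sum_mul]
    _ = 2 ^ ℓ * (1 - p) := by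
        have : ∑ k ∈ Finset.range (ℓ+1), (ℓ.choose k : ℝ) = ((∑ k ∈ Finset.range (ℓ+1), ℓ.choose k : ℕ) : ℝ) := by
          push_cast; ring
        rw [this, Nat.sum_range_choose]
        push_cast; ring

lemma transProb_to_zero (n ℓ : ℕ) (g0 g1 : ℕ → ℝ) (x : ℕ) :
    transProb n ℓ g0 g1 1 x 0 = 0 := by
  unfold transProb
  apply Finset.sum_eq_zero
  intro j _
  simp

lemma transProb_nonneg {n ℓ : ℕ} {g0 g1 : ℕ → ℝ} (hv : ValidProtocol ℓ g0 g1)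
    {x : ℕ} (hx : x ≤ n) (hn : 1 ≤ n) (y : ℕ) :
    0 ≤ transProb n ℓ g0 g1 1 x y := by
  have hp0 : (0:ℝ) ≤ (x:ℝ)/n := by positivity
  have hp1 : (x:ℝ)/n ≤ 1 := by
    rw [div_le_one (by exact_mod_cast hn)]
    exact_mod_cast hx
  have hq1a : 0 ≤ sampleProb ℓ g1 ((x:ℝ)/n) :=
    sampleProb_nonneg (fun k hk => ((hv k hk).2).1) hp0 hp1
  have hq1b : sampleProb ℓ g1 ((x:ℝ)/n) ≤ 1 :=
    sampleProb_le_one (fun k hk => ((hv k hk).2).2) (fun k hk => ((hv k hk).2).1) hp0 hp1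
  have hq0a : 0 ≤ sampleProb ℓ g0 ((x:ℝ)/n) :=
    sampleProb_nonneg (fun k hk => ((hv k hk).1).1) hp0 hp1
  have hq0b : sampleProb ℓ g0 ((x:ℝ)/n) ≤ 1 :=
    sampleProb_le_one (fun k hk => ((hv k hk).1).2) (fun k hk => ((hv k hk).1).1) hp0 hp1
  unfold transProb
  apply Finset.sum_nonneg
  intro j _
  split
  · exact mul_nonneg (binomProb_nonneg hq1a hq1b _) (binomProb_nonneg hq0a hq0b _)
  · exact le_refl 0

lemma transProb_gt_eq_zero {n ℓ : ℕ} {g0 g1 : ℕ → ℝ}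
    (hq00 : sampleProb ℓ g0 0 = 0) {x y : ℕ} (hx : x ≤ n) (hn : 1 ≤ n) (hy : n < y) :
    transProb n ℓ g0 g1 1 x y = 0 := by
  unfold transProb
  apply Finset.sum_eq_zero
  intro j hj
  split
  case isFalse => rfl
  case isTrue h =>
    rcases Nat.eq_zero_or_pos x with rfl | hx1
    · simp only [Nat.cast_zero, zero_div, hq00]
      rcases Nat.eq_zero_or_pos j with rfl | hj1
      · unfold binomProb
        rw [zero_pow (by omega : y - 1 - 0 ≠ 0)]
        ring
      · rw [binomProb_eq_zero_of_lt (by omega : 0 - 1 < j)]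
        ring
    · rcases le_or_gt j (x-1) with hjx | hjx
      · rw [binomProb_eq_zero_of_lt (show n - x - (1-1) < y - 1 - j by omega)]
        ring
      · rw [binomProb_eq_zero_of_lt hjx]
        ring

lemma sum_transProb_key {n ℓ : ℕ} (g0 g1 : ℕ → ℝ) {x : ℕ} (hx1 : 1 ≤ x) (hxn : x ≤ n) :
    ∑ y ∈ Finset.range (n+1), ((n:ℝ) - y) * transProb n ℓ g0 g1 1 x y
      = (n:ℝ) - 1 - ((n:ℝ) - x) * sampleProb ℓ g0 ((x:ℝ)/(n:ℝ))
        - ((x:ℝ) - 1) * sampleProb ℓ g1 ((x:ℝ)/(n:ℝ)) := by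
  have hz : n - x - (1 - 1) = n - x := by omega
  have step1 : ∀ y, ((n:ℝ) - y) * transProb n ℓ g0 g1 1 x y
      = ∑ j ∈ Finset.range (n+1), if 1 + j ≤ y then
          ((n:ℝ) - y) * (binomProb (x-1) (sampleProb ℓ g1 ((x:ℝ)/(n:ℝ))) j *
            binomProb (n-x) (sampleProb ℓ g0 ((x:ℝ)/(n:ℝ))) (y-1-j)) else 0 := by
    intro y
    unfold transProb
    rw [Finset.mul_sum]
    apply Finset.sum_congr rfl
    intro j _
    rw [hz, mul_ite, mul_zero]
  rw [Finset.sum_congr rfl (fun y _ => step1 y), Finset.sum_comm]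
  have step2 : ∀ j ∈ Finset.range (n+1),
      (∑ y ∈ Finset.range (n+1), if 1 + j ≤ y then
          ((n:ℝ) - y) * (binomProb (x-1) (sampleProb ℓ g1 ((x:ℝ)/(n:ℝ))) j *
            binomProb (n-x) (sampleProb ℓ g0 ((x:ℝ)/(n:ℝ))) (y-1-j)) else 0)
      = binomProb (x-1) (sampleProb ℓ g1 ((x:ℝ)/(n:ℝ))) j *
          ∑ i ∈ Finset.range (n - j), ((n:ℝ) - (1+j+i)) *
            binomProb (n-x) (sampleProb ℓ g0 ((x:ℝ)/(n:ℝ))) i := by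
    intro j hj
    rw [← Finset.sum_filter]
    have hfil : (Finset.range (n+1)).filter (fun y => 1 + j ≤ y) = Finset.Ico (1+j) (n+1) := by
      ext a
      simp only [Finset.mem_filter, Finset.mem_range, Finset.mem_Ico]
      omega
    rw [hfil, Finset.sum_Ico_eq_sum_range]
    have hnj : n + 1 - (1 + j) = n - j := by omega
    rw [hnj, Finset.mul_sum]
    apply Finset.sum_congr rfl
    intro i _
    have he : 1 + j + i - 1 - j = i := by omega
    rw [he]
    push_cast
    ring
  rw [Finset.sum_congr rfl step2]
  have hsub : Finset.range x ⊆ Finset.range (n+1) := Finset.range_subset_range.2 (by omega)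
  rw [← Finset.sum_subset hsub (fun j _ hj => by
    rw [binomProb_eq_zero_of_lt
      (show x - 1 < j by simp only [Finset.mem_range, not_lt] at hj; omega), zero_mul])]
  have step3 : ∀ j ∈ Finset.range x,
      binomProb (x-1) (sampleProb ℓ g1 ((x:ℝ)/(n:ℝ))) j *
        ∑ i ∈ Finset.range (n - j), ((n:ℝ) - (1+j+i)) *
          binomProb (n-x) (sampleProb ℓ g0 ((x:ℝ)/(n:ℝ))) i
      = binomProb (x-1) (sampleProb ℓ g1 ((x:ℝ)/(n:ℝ))) j *
          (((n:ℝ) - 1 - j) - ((n:ℝ) - x) * sampleProb ℓ g0 ((x:ℝ)/(n:ℝ))) := by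
    intro j hj
    have hjx : j < x := Finset.mem_range.1 hj
    congr 1
    have hsub2 : Finset.range ((n-x)+1) ⊆ Finset.range (n - j) := Finset.range_subset_range.2 (by omega)
    rw [← Finset.sum_subset hsub2 (fun i _ hi => by
      rw [binomProb_eq_zero_of_lt
        (show n - x < i by simp only [Finset.mem_range, not_lt] at hi; omega), mul_zero])]
    have expand : ∀ i ∈ Finset.range ((n-x)+1),
        ((n:ℝ) - (1+j+i)) * binomProb (n-x) (sampleProb ℓ g0 ((x:ℝ)/(n:ℝ))) i
        = ((n:ℝ) - 1 - j) * binomProb (n-x) (sampleProb ℓ g0 ((x:ℝ)/(n:ℝ))) i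
            - (i:ℝ) * binomProb (n-x) (sampleProb ℓ g0 ((x:ℝ)/(n:ℝ))) i := by
      intro i _
      push_cast
      ring
    rw [Finset.sum_congr rfl expand, Finset.sum_sub_distrib, ← Finset.mul_sum,
      binomProb_mass, binomProb_mean, mul_one, Nat.cast_sub hxn]
  rw [Finset.sum_congr rfl step3]
  have expand2 : ∀ j ∈ Finset.range x,
      binomProb (x-1) (sampleProb ℓ g1 ((x:ℝ)/(n:ℝ))) j *
        (((n:ℝ) - 1 - j) - ((n:ℝ) - x) * sampleProb ℓ g0 ((x:ℝ)/(n:ℝ)))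
      = ((n:ℝ) - 1 - ((n:ℝ)-x) * sampleProb ℓ g0 ((x:ℝ)/(n:ℝ))) *
          binomProb (x-1) (sampleProb ℓ g1 ((x:ℝ)/(n:ℝ))) j
        - (j:ℝ) * binomProb (x-1) (sampleProb ℓ g1 ((x:ℝ)/(n:ℝ))) j := by
    intro j _
    ring
  rw [Finset.sum_congr rfl expand2, Finset.sum_sub_distrib]
  have hrx : Finset.range x = Finset.range ((x-1)+1) := by congr 1; omega
  rw [hrx, ← Finset.mul_sum, binomProb_mass, binomProb_mean, mul_one, Nat.cast_sub hx1]
  ring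

lemma drift_real {n ℓ : ℕ} {g0 g1 : ℕ → ℝ} (hv : ValidProtocol ℓ g0 g1)
    (hch : ∀ p ∈ Set.Icc (0:ℝ) 1, charF ℓ g0 g1 p = 0)
    (hn : 2^ℓ + 2 ≤ n) {x : ℕ} (hx1 : 1 ≤ x) (hxn : x ≤ n) :
    (1 - 2^ℓ/(n:ℝ)) * ((n:ℝ) - x) ≤
      ∑ y ∈ Finset.range (n+1), ((n:ℝ) - y) * transProb n ℓ g0 g1 1 x y := by
  have hn1 : (1:ℝ) ≤ n := by exact_mod_cast (by omega : 1 ≤ n)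
  have hnpos : (0:ℝ) < n := by linarith
  have hp0 : (0:ℝ) ≤ (x:ℝ)/n := by positivity
  have hp1 : (x:ℝ)/n ≤ 1 := by rw [div_le_one hnpos]; exact_mod_cast hxn
  have hchx := hch ((x:ℝ)/n) ⟨hp0, hp1⟩
  unfold charF at hchx
  have hg1ℓ : g1 ℓ = 1 := by
    have h1 := hch 1 ⟨by norm_num, le_rfl⟩
    unfold charF at h1
    rw [sampleProb_one] at h1
    linarith
  have hkey := sum_transProb_key (ℓ := ℓ) (n := n) g0 g1 hx1 hxn
  rw [hkey]
  have h3 : -(x:ℝ) + x * sampleProb ℓ g1 ((x:ℝ)/(n:ℝ))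
      + ((n:ℝ)-x) * sampleProb ℓ g0 ((x:ℝ)/(n:ℝ)) = 0 := by
    have e : -(x:ℝ) + x * sampleProb ℓ g1 ((x:ℝ)/(n:ℝ))
        + ((n:ℝ)-x) * sampleProb ℓ g0 ((x:ℝ)/(n:ℝ))
        = (-((x:ℝ)/n) + ((x:ℝ)/n) * sampleProb ℓ g1 ((x:ℝ)/(n:ℝ))
            + (1-(x:ℝ)/n) * sampleProb ℓ g0 ((x:ℝ)/(n:ℝ))) * n := by
      field_simp
    rw [e, hchx, zero_mul]
  have hC : 1 - sampleProb ℓ g1 ((x:ℝ)/(n:ℝ)) ≤ 2^ℓ * (1 - (x:ℝ)/n) :=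
    one_sub_sampleProb_le (fun k hk => ((hv k hk).2).2) (fun k hk => ((hv k hk).2).1)
      hg1ℓ hp0 hp1
  have hrel : ((n:ℝ) - x) * sampleProb ℓ g0 ((x:ℝ)/(n:ℝ))
      = x * (1 - sampleProb ℓ g1 ((x:ℝ)/(n:ℝ))) := by nlinarith [h3]
  have hgoal : (n:ℝ) - 1 - ((n:ℝ)-x) * sampleProb ℓ g0 ((x:ℝ)/(n:ℝ))
      - ((x:ℝ)-1) * sampleProb ℓ g1 ((x:ℝ)/(n:ℝ))
      = ((n:ℝ) - x) - (1 - sampleProb ℓ g1 ((x:ℝ)/(n:ℝ))) := by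
    rw [hrel]; ring
  rw [hgoal]
  have e2 : (1 - 2^ℓ/(n:ℝ)) * ((n:ℝ)-x) = ((n:ℝ)-x) - 2^ℓ * (((n:ℝ)-x)/n) := by
    field_simp
  have e3 : 2^ℓ * (1 - (x:ℝ)/n) = 2^ℓ * (((n:ℝ)-x)/n) := by
    congr 1
    field_simp
  rw [e3] at hC
  linarith

section Chain

variable {Ω : Type} [MeasurableSpace Ω]

lemma path_event_measurable (X : ℕ → Ω → ℕ) (hm : ∀ s, Measurable (X s)) (t : ℕ) (w : ℕ → ℕ) :
    MeasurableSet {ω | ∀ s ≤ t, X s ω = w s} := by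
  have he : {ω | ∀ s ≤ t, X s ω = w s} = ⋂ s ∈ Set.Iic t, (X s) ⁻¹' {w s} := by
    ext ω
    simp [Set.mem_iInter]
  rw [he]
  exact MeasurableSet.biInter (Set.to_countable _)
    (fun s _ => (hm s) (measurableSet_singleton _))

lemma markov_marginal {n ℓ : ℕ} {g0 g1 : ℕ → ℝ} {z : ℕ} (μ : Measure Ω)
    [IsProbabilityMeasure μ]
    {X : ℕ → Ω → ℕ} (hX : IsBDChain n ℓ g0 g1 z μ X) (t x y : ℕ) :
    μ ({ω | X t ω = x} ∩ {ω | X (t+1) ω = y})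
      = ENNReal.ofReal (transProb n ℓ g0 g1 z x y) * μ {ω | X t ω = x} := by
  obtain ⟨hm, hcond⟩ := hX
  set w : (Fin t → ℕ) → ℕ → ℕ := fun v s => if h : s < t then v ⟨s, h⟩ else x with hw
  set U : (Fin t → ℕ) → Set Ω := fun v => {ω | ∀ s ≤ t, X s ω = w v s} with hU
  have hUm : ∀ v, MeasurableSet (U v) := fun v => path_event_measurable X hm t (w v)
  have hdisj : Pairwise (Function.onFun Disjoint U) := by
    intro v v' hvv'
    rcases Function.ne_iff.1 hvv' with ⟨s, hs⟩
    refine Set.disjoint_left.2 fun ω h1 h2 => ?_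
    have e1 := h1 s.1 (le_of_lt s.isLt)
    have e2 := h2 s.1 (le_of_lt s.isLt)
    simp only [hw, dif_pos s.isLt, Fin.eta] at e1 e2
    exact hs (e1 ▸ e2)
  have hcover : {ω | X t ω = x} = ⋃ v, U v := by
    ext ω
    constructor
    · intro hω
      refine Set.mem_iUnion.2 ⟨fun s => X s.1 ω, fun s hs => ?_⟩
      by_cases h : s < t
      · simp [hw, dif_pos h]
      · have hst : s = t := by omega
        subst hst
        simpa [hw, dif_neg h] using hω
    · intro hω
      rcases Set.mem_iUnion.1 hω with ⟨v, hv⟩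
      have := hv t le_rfl
      simpa [hw] using this
  have hper : ∀ v, μ (U v ∩ {ω | X (t+1) ω = y})
      = ENNReal.ofReal (transProb n ℓ g0 g1 z x y) * μ (U v) := by
    intro v
    by_cases h0 : μ (U v) = 0
    · rw [h0, mul_zero]
      exact le_antisymm ((measure_mono Set.inter_subset_left).trans h0.le) (zero_le)
    · have hwt : w v t = x := by simp [hw]
      have hc := hcond t (w v) y (by simpa only [hU] using h0)
      rw [hwt] at hc
      rw [ProbabilityTheory.cond_apply (by simpa only [hU] using hUm v)] at hc
      have hfin : μ (U v) ≠ ⊤ := measure_ne_top μ _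
      calc μ (U v ∩ {ω | X (t+1) ω = y})
          = μ (U v) * ((μ (U v))⁻¹ * μ (U v ∩ {ω | X (t+1) ω = y})) := by
            rw [← mul_assoc, ENNReal.mul_inv_cancel h0 hfin, one_mul]
        _ = ENNReal.ofReal (transProb n ℓ g0 g1 z x y) * μ (U v) := by
            rw [show (μ (U v))⁻¹ * μ (U v ∩ {ω | X (t+1) ω = y})
                = ENNReal.ofReal (transProb n ℓ g0 g1 z x y) from hc]
            ring
  have hdisj2 : Pairwise (Function.onFun Disjoint (fun v => U v ∩ {ω | X (t+1) ω = y})) :=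
    hdisj.mono fun v v' h => h.mono Set.inter_subset_left Set.inter_subset_left
  calc μ ({ω | X t ω = x} ∩ {ω | X (t+1) ω = y})
      = μ (⋃ v, U v ∩ {ω | X (t+1) ω = y}) := by rw [hcover, Set.iUnion_inter]
    _ = ∑' v, μ (U v ∩ {ω | X (t+1) ω = y}) :=
        measure_iUnion hdisj2 (fun v => (hUm v).inter ((hm (t+1)) (measurableSet_singleton y)))
    _ = ∑' v, ENNReal.ofReal (transProb n ℓ g0 g1 z x y) * μ (U v) := tsum_congr hper
    _ = ENNReal.ofReal (transProb n ℓ g0 g1 z x y) * ∑' v, μ (U v) := ENNReal.tsum_mul_left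
    _ = ENNReal.ofReal (transProb n ℓ g0 g1 z x y) * μ {ω | X t ω = x} := by
        rw [← measure_iUnion hdisj hUm, ← hcover]

lemma partition_next (μ : Measure Ω) {X : ℕ → Ω → ℕ} (hm : ∀ s, Measurable (X s)) (t y : ℕ) :
    μ {ω | X (t+1) ω = y}
      = ∑' x : ℕ, μ ({ω | X t ω = x} ∩ {ω | X (t+1) ω = y}) := by
  have hcover : {ω | X (t+1) ω = y} = ⋃ x : ℕ, ({ω | X t ω = x} ∩ {ω | X (t+1) ω = y}) := by
    ext ω
    simp only [Set.mem_iUnion, Set.mem_inter_iff, Set.mem_setOf_eq]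
    constructor
    · intro h
      exact ⟨X t ω, rfl, h⟩
    · rintro ⟨x, -, h⟩
      exact h
  conv_lhs => rw [hcover]
  refine measure_iUnion ?_ (fun x => ((hm t) (measurableSet_singleton x)).inter
    ((hm (t+1)) (measurableSet_singleton y)))
  intro x x' hxx'
  refine Set.disjoint_left.2 fun ω h1 h2 => ?_
  exact hxx' (h1.1 ▸ h2.1)

lemma state_gt_zero {n ℓ : ℕ} {g0 g1 : ℕ → ℝ} (μ : Measure Ω) [IsProbabilityMeasure μ]
    {X : ℕ → Ω → ℕ} (hX : IsBDChain n ℓ g0 g1 1 μ X) (hX0 : ∀ ω, X 0 ω = 1) :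
    ∀ t, μ {ω | X t ω = 0} = 0 := by
  intro t
  cases t with
  | zero =>
    have : {ω | X 0 ω = 0} = ∅ := by
      ext ω; simp [hX0 ω]
    rw [this, measure_empty]
  | succ t =>
    rw [partition_next μ hX.1 t 0]
    rw [ENNReal.tsum_eq_zero.2]
    intro x
    rw [markov_marginal μ hX t x 0, transProb_to_zero, ENNReal.ofReal_zero, zero_mul]

lemma state_le_n {n ℓ : ℕ} {g0 g1 : ℕ → ℝ} (μ : Measure Ω) [IsProbabilityMeasure μ]
    {X : ℕ → Ω → ℕ} (hX : IsBDChain n ℓ g0 g1 1 μ X) (hX0 : ∀ ω, X 0 ω = 1)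
    (hq00 : sampleProb ℓ g0 0 = 0) (hn : 1 ≤ n) :
    ∀ t x, n < x → μ {ω | X t ω = x} = 0 := by
  intro t
  induction t with
  | zero =>
    intro x hx
    have : {ω | X 0 ω = x} = ∅ := by
      ext ω; simp [hX0 ω]; omega
    rw [this, measure_empty]
  | succ t ih =>
    intro y hy
    rw [partition_next μ hX.1 t y]
    rw [ENNReal.tsum_eq_zero.2]
    intro x
    rw [markov_marginal μ hX t x y]
    rcases le_or_gt x n with hxn | hxn
    · rw [transProb_gt_eq_zero hq00 hxn hn hy, ENNReal.ofReal_zero, zero_mul]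
    · rw [ih x hxn, mul_zero]

lemma lint_eq {n : ℕ} (μ : Measure Ω) {X : ℕ → Ω → ℕ} (hm : ∀ s, Measurable (X s)) (t : ℕ) :
    ∫⁻ ω, ((n - X t ω : ℕ) : ℝ≥0∞) ∂μ
      = ∑ x ∈ Finset.range (n+1), ((n - x : ℕ) : ℝ≥0∞) * μ {ω | X t ω = x} := by
  have hfun : ∀ ω, ((n - X t ω : ℕ) : ℝ≥0∞)
      = ∑ x ∈ Finset.range (n+1),
          Set.indicator {ω' | X t ω' = x} (fun _ => ((n - x : ℕ) : ℝ≥0∞)) ω := by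
    intro ω
    rw [Finset.sum_congr rfl (fun x _ => Set.indicator_apply _ _ _)]
    simp only [Set.mem_setOf_eq, Finset.sum_ite_eq, Finset.mem_range]
    split
    · rfl
    · rename_i h
      rw [Nat.sub_eq_zero_of_le (by omega)]
      simp
  rw [lintegral_congr hfun]
  have hmeas : ∀ x ∈ Finset.range (n+1), Measurable
      (fun ω => Set.indicator {ω' | X t ω' = x} (fun _ => ((n - x : ℕ) : ℝ≥0∞)) ω) :=
    fun x _ => measurable_const.indicator ((hm t) (measurableSet_singleton x))
  trans (∑ x ∈ Finset.range (n+1),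
      ∫⁻ ω, Set.indicator {ω' | X t ω' = x} (fun _ => ((n - x : ℕ) : ℝ≥0∞)) ω ∂μ)
  · exact lintegral_finset_sum _ hmeas
  · exact Finset.sum_congr rfl fun x _ =>
      lintegral_indicator_const ((hm t) (measurableSet_singleton x)) _

end Chain

section Main

variable {Ω : Type} [MeasurableSpace Ω]

lemma main_bound {n ℓ : ℕ} {g0 g1 : ℕ → ℝ} (hv : ValidProtocol ℓ g0 g1)
    (hch : ∀ p ∈ Set.Icc (0:ℝ) 1, charF ℓ g0 g1 p = 0) (hn : 2^ℓ + 2 ≤ n)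
    (μ : Measure Ω) [IsProbabilityMeasure μ] {X : ℕ → Ω → ℕ}
    (hX : IsBDChain n ℓ g0 g1 1 μ X) (hX0 : ∀ ω, X 0 ω = 1) (T : ℕ) :
    ENNReal.ofReal ((1 - 2^ℓ/(n:ℝ))^T) ≤ μ {ω | X T ω ≠ n} := by
  have hm := hX.1
  have h2ℓ : 1 ≤ 2^ℓ := Nat.one_le_two_pow
  have hn1 : 1 ≤ n := by omega
  have hq00 : sampleProb ℓ g0 0 = 0 := by
    have h0 := hch 0 ⟨le_rfl, zero_le_one⟩
    unfold charF at h0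
    linarith
  set cR : ℝ := 1 - 2^ℓ/(n:ℝ) with hcR
  have hnR : (0:ℝ) < n := by exact_mod_cast hn1
  have hcR0 : 0 ≤ cR := by
    rw [hcR, sub_nonneg, div_le_one hnR]
    exact_mod_cast (by omega : 2^ℓ ≤ n)
  have hinner : ∀ x, 1 ≤ x → x ≤ n →
      ENNReal.ofReal (cR * ((n:ℝ) - x)) ≤ ∑ y ∈ Finset.range (n+1),
        ((n - y : ℕ):ℝ≥0∞) * ENNReal.ofReal (transProb n ℓ g0 g1 1 x y) := by
    intro x hx1 hxn
    have heq : ∀ y ∈ Finset.range (n+1),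
        ((n - y : ℕ):ℝ≥0∞) * ENNReal.ofReal (transProb n ℓ g0 g1 1 x y)
          = ENNReal.ofReal (((n:ℝ) - y) * transProb n ℓ g0 g1 1 x y) := by
      intro y hy
      have hyn : y ≤ n := by
        simp only [Finset.mem_range] at hy; omega
      have hy' : (0:ℝ) ≤ (n:ℝ) - y := by
        have : (y:ℝ) ≤ n := by exact_mod_cast hyn
        linarith
      rw [ENNReal.ofReal_mul hy']
      congr 1
      rw [← ENNReal.ofReal_natCast (n-y), Nat.cast_sub hyn]
    rw [Finset.sum_congr rfl heq, ← ENNReal.ofReal_sum_of_nonneg (fun y hy => by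
      have hyn : y ≤ n := by simp only [Finset.mem_range] at hy; omega
      have hy' : (0:ℝ) ≤ (n:ℝ) - y := by
        have : (y:ℝ) ≤ n := by exact_mod_cast hyn
        linarith
      exact mul_nonneg hy' (transProb_nonneg hv hxn hn1 y))]
    exact ENNReal.ofReal_le_ofReal (drift_real hv hch hn hx1 hxn)
  have hstep : ∀ t, ENNReal.ofReal cR * ∫⁻ ω, ((n - X t ω : ℕ):ℝ≥0∞) ∂μ
      ≤ ∫⁻ ω, ((n - X (t+1) ω : ℕ):ℝ≥0∞) ∂μ := by
    intro t
    rw [lint_eq μ hm t, lint_eq μ hm (t+1), Finset.mul_sum]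
    have hR : ∀ y ∈ Finset.range (n+1),
        ∑ x ∈ Finset.range (n+1), ((n - y : ℕ):ℝ≥0∞) *
          (ENNReal.ofReal (transProb n ℓ g0 g1 1 x y) * μ {ω | X t ω = x})
        ≤ ((n - y : ℕ):ℝ≥0∞) * μ {ω | X (t+1) ω = y} := by
      intro y _
      rw [← Finset.mul_sum]
      apply mul_le_mul_right
      calc ∑ x ∈ Finset.range (n+1),
            ENNReal.ofReal (transProb n ℓ g0 g1 1 x y) * μ {ω | X t ω = x}
          = ∑ x ∈ Finset.range (n+1), μ ({ω | X t ω = x} ∩ {ω | X (t+1) ω = y}) :=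
            Finset.sum_congr rfl fun x _ => (markov_marginal μ hX t x y).symm
        _ ≤ ∑' x : ℕ, μ ({ω | X t ω = x} ∩ {ω | X (t+1) ω = y}) := ENNReal.sum_le_tsum _
        _ = μ {ω | X (t+1) ω = y} := (partition_next μ hm t y).symm
    calc ∑ x ∈ Finset.range (n+1),
          ENNReal.ofReal cR * (((n - x : ℕ):ℝ≥0∞) * μ {ω | X t ω = x})
        ≤ ∑ x ∈ Finset.range (n+1), ∑ y ∈ Finset.range (n+1), ((n - y : ℕ):ℝ≥0∞) *
            (ENNReal.ofReal (transProb n ℓ g0 g1 1 x y) * μ {ω | X t ω = x}) := by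
          apply Finset.sum_le_sum
          intro x hx
          rcases Nat.eq_zero_or_pos x with rfl | hx1
          · rw [state_gt_zero μ hX hX0 t]
            simp
          · have hxn : x ≤ n := by
              simp only [Finset.mem_range] at hx; omega
            have h1 : ENNReal.ofReal cR * (((n - x : ℕ):ℝ≥0∞) * μ {ω | X t ω = x})
                = ENNReal.ofReal (cR * ((n:ℝ) - x)) * μ {ω | X t ω = x} := by
              rw [← mul_assoc]
              congr 1
              rw [← ENNReal.ofReal_natCast (n-x), ← ENNReal.ofReal_mul hcR0, Nat.cast_sub hxn]
            rw [h1]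
            calc ENNReal.ofReal (cR * ((n:ℝ) - x)) * μ {ω | X t ω = x}
                ≤ (∑ y ∈ Finset.range (n+1), ((n - y : ℕ):ℝ≥0∞) *
                    ENNReal.ofReal (transProb n ℓ g0 g1 1 x y)) * μ {ω | X t ω = x} :=
                  mul_le_mul_left (hinner x hx1 hxn) _
              _ = ∑ y ∈ Finset.range (n+1), ((n - y : ℕ):ℝ≥0∞) *
                    (ENNReal.ofReal (transProb n ℓ g0 g1 1 x y) * μ {ω | X t ω = x}) := by
                  rw [Finset.sum_mul]
                  exact Finset.sum_congr rfl fun y _ => by ring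
      _ = ∑ y ∈ Finset.range (n+1), ∑ x ∈ Finset.range (n+1), ((n - y : ℕ):ℝ≥0∞) *
            (ENNReal.ofReal (transProb n ℓ g0 g1 1 x y) * μ {ω | X t ω = x}) :=
          Finset.sum_comm
      _ ≤ ∑ y ∈ Finset.range (n+1), ((n - y : ℕ):ℝ≥0∞) * μ {ω | X (t+1) ω = y} :=
          Finset.sum_le_sum hR
  have hL0 : ∫⁻ ω, ((n - X 0 ω : ℕ):ℝ≥0∞) ∂μ = ((n - 1 : ℕ):ℝ≥0∞) := by
    have he : ∀ ω, ((n - X 0 ω : ℕ):ℝ≥0∞) = ((n - 1 : ℕ):ℝ≥0∞) := fun ω => by rw [hX0 ω]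
    rw [lintegral_congr he, lintegral_const, measure_univ, mul_one]
  have hind : ∀ t, ENNReal.ofReal cR ^ t * ((n - 1 : ℕ):ℝ≥0∞)
      ≤ ∫⁻ ω, ((n - X t ω : ℕ):ℝ≥0∞) ∂μ := by
    intro t
    induction t with
    | zero =>
      rw [pow_zero, one_mul, hL0]
    | succ t ih =>
      calc ENNReal.ofReal cR ^ (t+1) * ((n - 1 : ℕ):ℝ≥0∞)
          = ENNReal.ofReal cR * (ENNReal.ofReal cR ^ t * ((n - 1 : ℕ):ℝ≥0∞)) := by ring
        _ ≤ ENNReal.ofReal cR * ∫⁻ ω, ((n - X t ω : ℕ):ℝ≥0∞) ∂μ := mul_le_mul_right ih _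
        _ ≤ _ := hstep t
  have hupper : ∫⁻ ω, ((n - X T ω : ℕ):ℝ≥0∞) ∂μ
      ≤ ((n - 1 : ℕ):ℝ≥0∞) * μ {ω | X T ω ≠ n} := by
    rw [lint_eq μ hm T]
    have hper : ∀ y ∈ Finset.range (n+1), ((n - y : ℕ):ℝ≥0∞) * μ {ω | X T ω = y}
        ≤ ((n - 1 : ℕ):ℝ≥0∞) * μ ({ω | X T ω = y} ∩ {ω | X T ω ≠ n}) := by
      intro y _
      rcases Nat.eq_zero_or_pos y with rfl | hy1
      · rw [state_gt_zero μ hX hX0 T]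
        simp
      · by_cases hyn : y = n
        · subst hyn
          simp
        · have hss : {ω | X T ω = y} ∩ {ω | X T ω ≠ n} = {ω | X T ω = y} := by
            ext ω
            simp only [Set.mem_inter_iff, Set.mem_setOf_eq]
            exact ⟨fun h => h.1, fun h => ⟨h, by rw [h]; exact hyn⟩⟩
          rw [hss]
          exact mul_le_mul_left
            (by exact_mod_cast Nat.sub_le_sub_left hy1 n) _
    calc ∑ y ∈ Finset.range (n+1), ((n - y : ℕ):ℝ≥0∞) * μ {ω | X T ω = y}
        ≤ ∑ y ∈ Finset.range (n+1),
            ((n - 1 : ℕ):ℝ≥0∞) * μ ({ω | X T ω = y} ∩ {ω | X T ω ≠ n}) :=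
          Finset.sum_le_sum hper
      _ = ((n - 1 : ℕ):ℝ≥0∞) * ∑ y ∈ Finset.range (n+1),
            μ ({ω | X T ω = y} ∩ {ω | X T ω ≠ n}) := by rw [Finset.mul_sum]
      _ ≤ ((n - 1 : ℕ):ℝ≥0∞) * μ {ω | X T ω ≠ n} := by
          apply mul_le_mul_right
          have hdis : Set.PairwiseDisjoint (Finset.range (n+1) : Set ℕ)
              (fun y => {ω | X T ω = y} ∩ {ω | X T ω ≠ n}) := by
            intro a _ b _ hab
            refine Set.disjoint_left.2 fun ω h1 h2 => ?_
            exact hab (h1.1 ▸ h2.1)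
          rw [← measure_biUnion_finset hdis (fun y _ =>
            ((hm T) (measurableSet_singleton y)).inter
              ((hm T) (measurableSet_singleton n)).compl)]
          exact measure_mono (Set.iUnion₂_subset fun y _ => Set.inter_subset_right)
  have hK0 : ((n - 1 : ℕ):ℝ≥0∞) ≠ 0 := by
    simp only [ne_eq, Nat.cast_eq_zero]
    omega
  have hKt : ((n - 1 : ℕ):ℝ≥0∞) ≠ ⊤ := ENNReal.natCast_ne_top _
  have hfinal : ((n - 1 : ℕ):ℝ≥0∞) * ENNReal.ofReal cR ^ T
      ≤ ((n - 1 : ℕ):ℝ≥0∞) * μ {ω | X T ω ≠ n} := by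
    rw [mul_comm ((n - 1 : ℕ):ℝ≥0∞) (ENNReal.ofReal cR ^ T)]
    exact (hind T).trans hupper
  rw [ENNReal.ofReal_pow hcR0]
  exact (ENNReal.mul_le_mul_iff_right hK0 hKt).1 hfinal

end Main

/-- for a protocol family with constant sample size `ℓ ≥ 1` whose
characteristic function `F_n` vanishes identically on `[0,1]` for all sufficiently large `n`,
there is a sequence of initial configurations `C_n` such that for every `ε > 0` there is
`c > 0` with `Pr[τ_n(C_n) > n^{1-ε}] ≥ 1 - n^{-c}` for all sufficiently large `n`. -/
theorem stmt_11 (ℓ : ℕ) (hℓ : 1 ≤ ℓ) (g0 g1 : ℕ → ℕ → ℝ)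
    (hvalid : ∀ n : ℕ, ValidProtocol ℓ (g0 n) (g1 n))
    (hF : ∃ N₀ : ℕ, ∀ n : ℕ, N₀ ≤ n →
      ∀ p ∈ Set.Icc (0 : ℝ) 1, charF ℓ (g0 n) (g1 n) p = 0) :
    ∃ z x0 : ℕ → ℕ, (∀ n, z n ≤ 1) ∧ (∀ n, z n ≤ x0 n ∧ x0 n ≤ n - 1 + z n) ∧
      ∀ ε : ℝ, 0 < ε → ∃ c : ℝ, 0 < c ∧ ∃ N : ℕ, ∀ n : ℕ, N ≤ n →
        ∀ (Ω : Type) [MeasurableSpace Ω] (μ : Measure Ω) [IsProbabilityMeasure μ]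
          (X : ℕ → Ω → ℕ), IsBDChain n ℓ (g0 n) (g1 n) (z n) μ X →
            (∀ ω, X 0 ω = x0 n) →
            1 - ENNReal.ofReal ((n : ℝ) ^ (-c)) ≤
              μ {ω | ENNReal.ofReal ((n : ℝ) ^ ((1 : ℝ) - ε)) < convTime n (z n) X ω} := by
  obtain ⟨N₀, hF⟩ := hF
  refine ⟨fun _ => 1, fun _ => 1, fun _ => le_rfl,
    fun n => ⟨le_rfl, by show (1:ℕ) ≤ n - 1 + 1; omega⟩, ?_⟩
  intro ε hε
  set ε' : ℝ := min ε (1/2) with hε'def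
  have hε'pos : 0 < ε' := lt_min hε (by norm_num)
  have hε'le : ε' ≤ ε := min_le_left _ _
  have hε'half : ε' ≤ 1/2 := min_le_right _ _
  refine ⟨ε'/2, by positivity, ?_⟩
  refine ⟨max N₀ (max (2^ℓ + 2) (⌈((2:ℝ)^(ℓ+1))^((2:ℝ)/ε')⌉₊ + 1)), ?_⟩
  intro n hn Ω _ μ _ X hX hX0
  have hnN₀ : N₀ ≤ n := le_trans (le_max_left _ _) hn
  have hn2 : 2^ℓ + 2 ≤ n := le_trans (le_trans (le_max_left _ _) (le_max_right _ _)) hn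
  have h2ℓ : 1 ≤ 2^ℓ := Nat.one_le_two_pow
  have hn1 : 1 ≤ n := by omega
  have hnR : (1:ℝ) ≤ n := by exact_mod_cast hn1
  have hnpos : (0:ℝ) < n := by linarith
  have hnr : ((2:ℝ)^(ℓ+1))^((2:ℝ)/ε') ≤ (n:ℝ) := by
    have h1 : ⌈((2:ℝ)^(ℓ+1))^((2:ℝ)/ε')⌉₊ ≤ n := by
      have := le_trans (le_trans (le_max_right _ _) (le_max_right _ _)) hn
      omega
    calc ((2:ℝ)^(ℓ+1))^((2:ℝ)/ε') ≤ (⌈((2:ℝ)^(ℓ+1))^((2:ℝ)/ε')⌉₊ : ℝ) := Nat.le_ceil _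
      _ ≤ n := by exact_mod_cast h1
  have hX1 : IsBDChain n ℓ (g0 n) (g1 n) 1 μ X := hX
  have hX01 : ∀ ω, X 0 ω = 1 := hX0
  set T : ℕ := ⌊(n:ℝ) ^ ((1:ℝ) - ε)⌋₊ + 1 with hTdef
  have hrnn : (0:ℝ) ≤ (n:ℝ) ^ ((1:ℝ) - ε) := Real.rpow_nonneg (le_of_lt hnpos) _
  have hT1 : (n:ℝ) ^ ((1:ℝ) - ε) < (T:ℝ) := by
    rw [hTdef]
    push_cast
    exact Nat.lt_floor_add_one _
  have hexp : (n:ℝ) ^ ((1:ℝ) - ε) ≤ (n:ℝ) ^ ((1:ℝ) - ε') :=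
    Real.rpow_le_rpow_of_exponent_le hnR (by linarith)
  have hone : (1:ℝ) ≤ (n:ℝ) ^ ((1:ℝ) - ε') := by
    calc (1:ℝ) = (n:ℝ) ^ (0:ℝ) := by rw [Real.rpow_zero]
      _ ≤ (n:ℝ) ^ ((1:ℝ) - ε') := Real.rpow_le_rpow_of_exponent_le hnR (by linarith)
  have hTle : (T:ℝ) ≤ 2 * (n:ℝ) ^ ((1:ℝ) - ε') := by
    rw [hTdef]
    push_cast
    have := Nat.floor_le hrnn
    linarith
  -- key arithmetic: T * (2^ℓ / n) ≤ n ^ (-(ε'/2))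
  have hA : (0:ℝ) < (2:ℝ)^(ℓ+1) := by positivity
  have h2pow : (2:ℝ)^(ℓ+1) ≤ (n:ℝ) ^ (ε'/2) := by
    have h1 : (((2:ℝ)^(ℓ+1))^((2:ℝ)/ε')) ^ (ε'/2) ≤ (n:ℝ) ^ (ε'/2) :=
      Real.rpow_le_rpow (Real.rpow_nonneg (le_of_lt hA) _) hnr (by positivity)
    have h2 : (((2:ℝ)^(ℓ+1))^((2:ℝ)/ε')) ^ (ε'/2) = (2:ℝ)^(ℓ+1) := by
      rw [← Real.rpow_mul (le_of_lt hA)]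
      have : (2:ℝ)/ε' * (ε'/2) = 1 := by
        field_simp
      rw [this, Real.rpow_one]
    rwa [h2] at h1
  have hkey : (T:ℝ) * ((2:ℝ)^ℓ / n) ≤ (n:ℝ) ^ (-(ε'/2)) := by
    have e1 : (T:ℝ) * ((2:ℝ)^ℓ / n) ≤ (2:ℝ)^(ℓ+1) * ((n:ℝ) ^ ((1:ℝ) - ε') / n) := by
      have hd : (0:ℝ) ≤ (2:ℝ)^ℓ / n := by positivity
      calc (T:ℝ) * ((2:ℝ)^ℓ / n) ≤ (2 * (n:ℝ) ^ ((1:ℝ) - ε')) * ((2:ℝ)^ℓ / n) :=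
            mul_le_mul_of_nonneg_right hTle hd
        _ = (2:ℝ)^(ℓ+1) * ((n:ℝ) ^ ((1:ℝ) - ε') / n) := by
            rw [pow_succ]
            ring
    have e2 : (n:ℝ) ^ (-ε') * (n:ℝ) = (n:ℝ) ^ ((1:ℝ) - ε') := by
      nth_rewrite 2 [← Real.rpow_one (n:ℝ)]
      rw [← Real.rpow_add hnpos]
      congr 1
      ring
    have e2' : (n:ℝ) ^ ((1:ℝ) - ε') / n = (n:ℝ) ^ (-ε') := by
      rw [← e2, mul_div_cancel_right₀ _ (ne_of_gt hnpos)]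
    rw [e2'] at e1
    have e3 : (2:ℝ)^(ℓ+1) * (n:ℝ) ^ (-ε') ≤ (n:ℝ) ^ (ε'/2) * (n:ℝ) ^ (-ε') :=
      mul_le_mul_of_nonneg_right h2pow (Real.rpow_nonneg (le_of_lt hnpos) _)
    have e4 : (n:ℝ) ^ (ε'/2) * (n:ℝ) ^ (-ε') = (n:ℝ) ^ (-(ε'/2)) := by
      rw [← Real.rpow_add hnpos]
      congr 1
      ring
    rw [e4] at e3
    linarith
  have hch : ∀ p ∈ Set.Icc (0:ℝ) 1, charF ℓ (g0 n) (g1 n) p = 0 := hF n hnN₀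
  have hmb := main_bound (hvalid n) hch hn2 μ hX1 hX01 T
  -- event inclusion
  have hsub : {ω | X T ω ≠ n} ⊆
      {ω | ENNReal.ofReal ((n : ℝ) ^ ((1 : ℝ) - ε)) < convTime n 1 X ω} := by
    intro ω hω
    simp only [Set.mem_setOf_eq] at hω ⊢
    unfold convTime
    have hlow : (T : ℝ≥0∞) ≤ sInf {r : ℝ≥0∞ | ∃ t : ℕ, r = t ∧ ∀ s, t ≤ s → X s ω = n * 1} := by
      apply le_sInf
      rintro r ⟨t, rfl, hall⟩
      have hTt : T ≤ t := by
        by_contra hc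
        push_neg at hc
        have := hall T (by omega)
        rw [mul_one] at this
        exact hω this
      exact_mod_cast hTt
    refine lt_of_lt_of_le ?_ hlow
    rw [← ENNReal.ofReal_natCast T]
    exact (ENNReal.ofReal_lt_ofReal_iff (by positivity)).2 hT1
  -- numeric chain
  have hd1 : (2:ℝ)^ℓ / n ≤ 1 := by
    rw [div_le_one hnpos]
    exact_mod_cast (by omega : 2^ℓ ≤ n)
  have hd0 : (0:ℝ) ≤ (2:ℝ)^ℓ / n := by positivity
  have hncc1 : (n:ℝ) ^ (-(ε'/2)) ≤ 1 :=
    Real.rpow_le_one_of_one_le_of_nonpos hnR (by linarith)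
  have hTd1 : (T:ℝ) * ((2:ℝ)^ℓ / n) ≤ 1 := le_trans hkey hncc1
  have hTd0 : (0:ℝ) ≤ (T:ℝ) * ((2:ℝ)^ℓ / n) := by positivity
  have hbern : 1 - (T:ℝ) * ((2:ℝ)^ℓ / n) ≤ (1 - (2:ℝ)^ℓ/(n:ℝ))^T := by
    have h := one_add_mul_le_pow (show (-2:ℝ) ≤ -((2:ℝ)^ℓ/(n:ℝ)) by linarith) T
    have e : (1 + -((2:ℝ)^ℓ/(n:ℝ))) = 1 - (2:ℝ)^ℓ/(n:ℝ) := by ring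
    rw [e] at h
    linarith
  calc 1 - ENNReal.ofReal ((n : ℝ) ^ (-(ε'/2)))
      ≤ ENNReal.ofReal (1 - (T:ℝ) * ((2:ℝ)^ℓ / n)) := by
        rw [tsub_le_iff_right, ← ENNReal.ofReal_add (by linarith) (Real.rpow_nonneg (le_of_lt hnpos) _)]
        rw [show (1:ℝ≥0∞) = ENNReal.ofReal 1 by simp]
        exact ENNReal.ofReal_le_ofReal (by linarith)
    _ ≤ ENNReal.ofReal ((1 - (2:ℝ)^ℓ/(n:ℝ))^T) := ENNReal.ofReal_le_ofReal hbern
    _ ≤ μ {ω | X T ω ≠ n} := hmb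
    _ ≤ μ {ω | ENNReal.ofReal ((n : ℝ) ^ ((1 : ℝ) - ε)) < convTime n 1 X ω} :=
        measure_mono hsub
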